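/- Let 0 < r < 1. Then the equation 2rm = (m − 1/2)²(m + 3/2) has exactly three real solutions m₁ < m₂ < m₃, and they satisfy m₁ < −3/2, 0 < m₂ < 1/2, and 1/2 < m₃ < 3/2. -/
import Mathlib


/-- **Roots of the cubic fixed-point equation.**
For `0 < r < 1`, the equation `2rm = (m − 1/2)²(m + 3/2)` has exactly three real
solutions `m₁ < m₂ < m₃`, satisfying `m₁ < −3/2`, `0 < m₂ < 1/2`, and
`1/2 < m₃ < 3/2`. -/
theorem cubic_fixed_point_roots (r : ℝ) (hr0 : 0 < r) (hr1 : r < 1) :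
    ∃ m1 m2 m3 : ℝ, m1 < m2 ∧ m2 < m3 ∧
      m1 < -(3 / 2) ∧ 0 < m2 ∧ m2 < 1 / 2 ∧ 1 / 2 < m3 ∧ m3 < 3 / 2 ∧
      {m : ℝ | 2 * r * m = (m - 1 / 2) ^ 2 * (m + 3 / 2)} = {m1, m2, m3} := by
  set f : ℝ → ℝ := fun m => (m - 1 / 2) ^ 2 * (m + 3 / 2) - 2 * r * m with hf
  have hcont : Continuous f := by fun_prop
  -- root m1 in [-3, -3/2]
  obtain ⟨m1, hm1mem, hfm1⟩ : ∃ m1 ∈ Set.Icc (-3 : ℝ) (-(3/2)), f m1 = 0 := by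
    have h := intermediate_value_Icc (by norm_num : (-3 : ℝ) ≤ -(3/2))
      hcont.continuousOn (a := -3) (b := -(3/2))
    have : (0 : ℝ) ∈ Set.Icc (f (-3)) (f (-(3/2))) := by
      simp only [hf]; constructor <;> nlinarith
    obtain ⟨x, hx, hx0⟩ := h this
    exact ⟨x, hx, hx0⟩
  obtain ⟨m2, hm2mem, hfm2⟩ : ∃ m2 ∈ Set.Icc (0 : ℝ) (1/2), f m2 = 0 := by
    have h := intermediate_value_Icc' (by norm_num : (0 : ℝ) ≤ 1/2)
      hcont.continuousOn (a := 0) (b := 1/2)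
    have : (0 : ℝ) ∈ Set.Icc (f (1/2)) (f 0) := by
      simp only [hf]; constructor <;> nlinarith
    obtain ⟨x, hx, hx0⟩ := h this
    exact ⟨x, hx, hx0⟩
  obtain ⟨m3, hm3mem, hfm3⟩ : ∃ m3 ∈ Set.Icc ((1:ℝ)/2) (3/2), f m3 = 0 := by
    have h := intermediate_value_Icc (by norm_num : (1/2 : ℝ) ≤ 3/2)
      hcont.continuousOn (a := 1/2) (b := 3/2)
    have : (0 : ℝ) ∈ Set.Icc (f (1/2)) (f (3/2)) := by
      simp only [hf]; constructor <;> nlinarith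
    obtain ⟨x, hx, hx0⟩ := h this
    exact ⟨x, hx, hx0⟩
  have hfm1' : (m1 - 1/2)^2 * (m1 + 3/2) - 2*r*m1 = 0 := hfm1
  have hfm2' : (m2 - 1/2)^2 * (m2 + 3/2) - 2*r*m2 = 0 := hfm2
  have hfm3' : (m3 - 1/2)^2 * (m3 + 3/2) - 2*r*m3 = 0 := hfm3
  -- strict bounds
  have h1lt : m1 < -(3/2) := by
    rcases lt_or_eq_of_le hm1mem.2 with h | h
    · exact h
    · exfalso; rw [h] at hfm1'; nlinarith
  have h2pos : 0 < m2 := by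
    rcases lt_or_eq_of_le hm2mem.1 with h | h
    · exact h
    · exfalso; rw [← h] at hfm2'; nlinarith
  have h2lt : m2 < 1/2 := by
    rcases lt_or_eq_of_le hm2mem.2 with h | h
    · exact h
    · exfalso; rw [h] at hfm2'; nlinarith
  have h3gt : 1/2 < m3 := by
    rcases lt_or_eq_of_le hm3mem.1 with h | h
    · exact h
    · exfalso; rw [← h] at hfm3'; nlinarith
  have h3lt : m3 < 3/2 := by
    rcases lt_or_eq_of_le hm3mem.2 with h | h
    · exact h
    · exfalso; rw [h] at hfm3'; nlinarith
  have h12 : m1 < m2 := by linarith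
  have h23 : m2 < m3 := by linarith
  have hne12 : m1 ≠ m2 := ne_of_lt h12
  have hne13 : m1 ≠ m3 := ne_of_lt (by linarith)
  have hne23 : m2 ≠ m3 := ne_of_lt h23
  -- Vieta
  have q12 : m1^2 + m1*m2 + m2^2 + (m1+m2)/2 - (5/4 + 2*r) = 0 := by
    have h : (m1 - m2) * (m1^2 + m1*m2 + m2^2 + (m1+m2)/2 - (5/4 + 2*r)) = 0 := by
      linear_combination hfm1' - hfm2'
    exact (mul_eq_zero.mp h).resolve_left (sub_ne_zero.mpr hne12)
  have q13 : m1^2 + m1*m3 + m3^2 + (m1+m3)/2 - (5/4 + 2*r) = 0 := by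
    have h : (m1 - m3) * (m1^2 + m1*m3 + m3^2 + (m1+m3)/2 - (5/4 + 2*r)) = 0 := by
      linear_combination hfm1' - hfm3'
    exact (mul_eq_zero.mp h).resolve_left (sub_ne_zero.mpr hne13)
  have hs1 : m1 + m2 + m3 = -(1/2) := by
    have h : (m2 - m3) * (m1 + m2 + m3 + 1/2) = 0 := by
      linear_combination q12 - q13
    have := (mul_eq_zero.mp h).resolve_left (sub_ne_zero.mpr hne23)
    linarith
  have he2 : m1*m2 + m1*m3 + m2*m3 = -(5/4 + 2*r) := by
    linear_combination (m1 + m2) * hs1 - q12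
  have he3 : m1*m2*m3 = -(3/8) := by
    linear_combination hfm1' - m1^2 * hs1 + m1 * he2
  refine ⟨m1, m2, m3, h12, h23, h1lt, h2pos, h2lt, h3gt, h3lt, ?_⟩
  ext x
  simp only [Set.mem_setOf_eq, Set.mem_insert_iff, Set.mem_singleton_iff]
  constructor
  · intro hx
    have hprod : (x - m1) * ((x - m2) * (x - m3)) = 0 := by
      linear_combination -hx - x^2 * hs1 + x * he2 - he3
    rcases mul_eq_zero.mp hprod with h | h
    · left; linarith [sub_eq_zero.mp h]
    · rcases mul_eq_zero.mp h with h' | h'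
      · right; left; linarith [sub_eq_zero.mp h']
      · right; right; linarith [sub_eq_zero.mp h']
  · rintro (rfl | rfl | rfl)
    · linear_combination -hfm1'
    · linear_combination -hfm2'
    · linear_combination -hfm3'
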